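/- Let r ≥ 1, let μ be a stationary-consistent probability law on A^r with common (r−1)-block marginal μ₋, and let u* be the (r−1)-step Markov extension u*(c,a) := μ(c)·q(a | c₂,…,c_r) with q(a|s) := μ(s,a)/μ₋(s) on {μ₋ > 0}. For every u ∈ U(μ) define the gap Δ_μ(u) := [−∑_{s∈A^{r−1}, a∈A} μ(s,a)·log(μ(s,a)/μ₋(s))] − J(u). Then for every u ∈ U(μ): Δ_μ(u) = ∑_{c∈A^r, a∈A} u(c,a)·log( u(c,a)·μ₋(c₂,…,c_r) / ( μ(c)·μ((c₂,…,c_r),a) ) ) (all terms with u(c,a) = 0 contributing 0), this quantity is nonnegative, and Δ_μ(u) = 0 if and only if u = u*. -/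

import Mathlib

open Finset

/-- Context marginal of a block law on `A^(n+1) × A` (contexts are `Fin (n+1) → A`,
so the memory length is `r = n+1 ≥ 1`). -/
noncomputable def eta {A : Type*} [Fintype A] {n : ℕ}
    (u : (Fin (n + 1) → A) → A → ℝ) (c : Fin (n + 1) → A) : ℝ :=
  ∑ a, u c a

/-- Entropy-rate functional.  In Lean, `Real.log 0 = 0` and `0 * x = 0`, so the
conventions `0·log 0 = 0` and "terms with `u(c,a) = 0` contribute `0`" hold
automatically. -/
noncomputable def J {A : Type*} [Fintype A] {n : ℕ}
    (u : (Fin (n + 1) → A) → A → ℝ) : ℝ :=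
  -∑ c, ∑ a, u c a * Real.log (u c a / eta u c)

/-- A block law: nonnegative entries with total mass one. -/
def IsBlockLaw {A : Type*} [Fintype A] {n : ℕ}
    (u : (Fin (n + 1) → A) → A → ℝ) : Prop :=
  (∀ c a, 0 ≤ u c a) ∧ ∑ c, ∑ a, u c a = 1

/-- The context `(α, d₁, …, d_{r-1})` obtained from `d = (d₁, …, d_r)` by
prepending `α` and dropping the last entry. -/
def shiftCtx {A : Type*} {n : ℕ} (α : A) (d : Fin (n + 1) → A) : Fin (n + 1) → A :=
  Fin.cons α (fun i : Fin n => d i.castSucc)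

/-- Stationary consistency:
`∑_α u((α,d₁,…,d_{r-1}), d_r) = ∑_β u(d, β)` for every block `d`. -/
def StationaryConsistent {A : Type*} [Fintype A] {n : ℕ}
    (u : (Fin (n + 1) → A) → A → ℝ) : Prop :=
  ∀ d : Fin (n + 1) → A,
    ∑ α : A, u (shiftCtx α d) (d (Fin.last n)) = ∑ β : A, u d β

/-- The feasible class determined by features `G` and targets `b`. -/
def Feasible {A : Type*} [Fintype A] {n m : ℕ}
    (G : Fin m → (Fin (n + 1) → A) → A → ℝ) (b : Fin m → ℝ)
    (u : (Fin (n + 1) → A) → A → ℝ) : Prop :=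
  IsBlockLaw u ∧ StationaryConsistent u ∧
    ∀ j, ∑ c, ∑ a, u c a * G j c a = b j

/-- The common `(r-1)`-block marginal `μ₋(s) = ∑_a μ(s,a)` of a
stationary-consistent law `μ` on `A^r` (contexts are `Fin (n+1) → A`, so
`r = n+1` and `(r-1)`-blocks are `Fin n → A`; for `r = 1`, `Fin 0 → A` is a
singleton). -/
noncomputable def muMinus {A : Type*} [Fintype A] {n : ℕ}
    (μ : (Fin (n + 1) → A) → ℝ) (s : Fin n → A) : ℝ :=
  ∑ a, μ (Fin.snoc s a)

/-- The `(r-1)`-step Markov extension `u*(c,a) = μ(c) · q(a | c₂,…,c_r)`. -/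
noncomputable def MarkovExt {A : Type*} [Fintype A] {n : ℕ}
    (μ : (Fin (n + 1) → A) → ℝ) (q : (Fin n → A) → A → ℝ)
    (c : Fin (n + 1) → A) (a : A) : ℝ :=
  μ c * q (Fin.tail c) a

/-- The gap functional
`Δ_μ(u) = [−∑_{s,a} μ(s,a) log(μ(s,a)/μ₋(s))] − J(u)` equals
`∑_{c,a} u(c,a)·log(u(c,a)·μ₋(c₂,…,c_r) / (μ(c)·μ((c₂,…,c_r),a)))`, is
nonnegative on `U(μ)`, and vanishes exactly at the Markov extension `u*`.
(Terms with `u(c,a) = 0` contribute `0` automatically since `0 * x = 0`.) -/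
private lemma gibbs_le {x y : ℝ} (hx : 0 ≤ x) (hy : 0 ≤ y) (h : x ≠ 0 → 0 < y) :
    x - y ≤ x * Real.log (x / y) := by
  rcases hx.eq_or_lt with h0 | hx
  · rw [← h0]; simpa using hy
  · have hy' := h hx.ne'
    have hl : Real.log (x / y) = - Real.log (y / x) := by
      rw [← Real.log_inv, inv_div]
    have h2 := Real.log_le_sub_one_of_pos (div_pos hy' hx)
    have h3 : x * (y / x) = y := mul_div_cancel₀ y hx.ne'
    nlinarith

private lemma gibbs_eq {x y : ℝ} (hx : 0 ≤ x) (hy : 0 ≤ y) (h : x ≠ 0 → 0 < y)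
    (heq : x * Real.log (x / y) = x - y) : x = y := by
  rcases hx.eq_or_lt with h0 | hx
  · rw [← h0] at heq ⊢; simp at heq; linarith
  · have hy' := h hx.ne'
    by_contra hne
    have hne' : y / x ≠ 1 := by
      intro h1
      rw [div_eq_one_iff_eq hx.ne'] at h1
      exact hne h1.symm
    have h2 := Real.log_lt_sub_one_of_pos (div_pos hy' hx) hne'
    have hl : Real.log (x / y) = - Real.log (y / x) := by
      rw [← Real.log_inv, inv_div]
    have h3 : x * (y / x) = y := mul_div_cancel₀ y hx.ne'
    nlinarith

theorem stmt9 {A : Type*} [Fintype A] [Nonempty A] {n : ℕ}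
    (μ : (Fin (n + 1) → A) → ℝ)
    (hμ : (∀ c, 0 ≤ μ c) ∧ ∑ c, μ c = 1)
    (hμstat : ∀ s : Fin n → A, ∑ a, μ (Fin.snoc s a) = ∑ α, μ (Fin.cons α s))
    (q : (Fin n → A) → A → ℝ)
    (hqpos : ∀ s, 0 < muMinus μ s → ∀ a, q s a = μ (Fin.snoc s a) / muMinus μ s)
    (hqzero : ∀ s, muMinus μ s = 0 → (∀ a, 0 ≤ q s a) ∧ ∑ a, q s a = 1)
    (u : (Fin (n + 1) → A) → A → ℝ)
    (hu : IsBlockLaw u ∧ StationaryConsistent u ∧ ∀ c, eta u c = μ c) :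
    ((-∑ s : Fin n → A, ∑ a, μ (Fin.snoc s a) *
        Real.log (μ (Fin.snoc s a) / muMinus μ s)) - J u =
      ∑ c, ∑ a, u c a *
        Real.log (u c a * muMinus μ (Fin.tail c) /
          (μ c * μ (Fin.snoc (Fin.tail c) a)))) ∧
    0 ≤ (-∑ s : Fin n → A, ∑ a, μ (Fin.snoc s a) *
        Real.log (μ (Fin.snoc s a) / muMinus μ s)) - J u ∧
    ((-∑ s : Fin n → A, ∑ a, μ (Fin.snoc s a) *
        Real.log (μ (Fin.snoc s a) / muMinus μ s)) - J u = 0 ↔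
      u = MarkovExt μ q) := by
    obtain ⟨⟨hupos, husum⟩, hustat, heta⟩ := hu
    obtain ⟨hμpos, hμsum⟩ := hμ
    -- grouping identity from stationary consistency of u
    have hgroup : ∀ (s : Fin n → A) (a : A),
        ∑ α, u (Fin.cons α s) a = μ (Fin.snoc s a) := by
      intro s a
      have h := hustat (Fin.snoc s a)
      have h1 : ∀ α : A, shiftCtx α (Fin.snoc s a) = Fin.cons α s := by
        intro α
        unfold shiftCtx
        rw [show (fun i : Fin n => (Fin.snoc s a : Fin (n + 1) → A) i.castSucc) = s from
          funext fun i => Fin.snoc_castSucc (α := fun _ => A) a s i]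
      rw [show ((Fin.snoc s a : Fin (n + 1) → A) (Fin.last n)) = a from
        Fin.snoc_last _ _] at h
      simp only [h1] at h
      rw [h]
      exact heta (Fin.snoc s a)
    have hB : ∀ c a, u c a ≤ μ (Fin.snoc (Fin.tail c) a) := by
      intro c a
      rw [← hgroup (Fin.tail c) a]
      have := Finset.single_le_sum (f := fun α => u (Fin.cons α (Fin.tail c)) a)
        (fun α _ => hupos _ _) (Finset.mem_univ (c 0))
      simp only [Fin.cons_self_tail] at this
      exact this
    have hC : ∀ c a, u c a ≤ μ c := by
      intro c a
      rw [← heta c]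
      exact Finset.single_le_sum (fun b _ => hupos c b) (Finset.mem_univ a)
    have hD : ∀ (s : Fin n → A) a, μ (Fin.snoc s a) ≤ muMinus μ s := fun s a =>
      Finset.single_le_sum (fun b _ => hμpos _) (Finset.mem_univ a)
    have hmm0 : ∀ s, 0 ≤ muMinus μ s := fun s =>
      Finset.sum_nonneg fun a _ => hμpos _
    have hqsum : ∀ s, ∑ a, q s a = 1 := by
      intro s
      rcases (hmm0 s).eq_or_lt with h0 | hpos
      · exact (hqzero s h0.symm).2
      · rw [Finset.sum_congr rfl (fun a _ => hqpos s hpos a), ← Finset.sum_div]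
        exact div_self hpos.ne'
    have hq0 : ∀ s a, 0 ≤ q s a := by
      intro s a
      rcases (hmm0 s).eq_or_lt with h0 | hpos
      · exact (hqzero s h0.symm).1 a
      · rw [hqpos s hpos a]
        exact div_nonneg (hμpos _) (hmm0 s)
    set v := MarkovExt μ q with hvdef
    have hv0 : ∀ c a, 0 ≤ v c a := fun c a => mul_nonneg (hμpos c) (hq0 _ a)
    have hvc : ∀ c, ∑ a, v c a = μ c := by
      intro c
      rw [hvdef]
      unfold MarkovExt
      rw [← Finset.mul_sum, hqsum, mul_one]
    have hvsum : ∑ c, ∑ a, v c a = 1 := by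
      rw [Finset.sum_congr rfl fun c _ => hvc c, hμsum]
    have hkey : ∀ c a, u c a ≠ 0 → 0 < μ c ∧ 0 < μ (Fin.snoc (Fin.tail c) a) ∧
        0 < muMinus μ (Fin.tail c) := by
      intro c a hne
      have hu' : 0 < u c a := (hupos c a).lt_of_ne (Ne.symm hne)
      exact ⟨hu'.trans_le (hC c a), hu'.trans_le (hB c a),
        hu'.trans_le ((hB c a).trans (hD _ a))⟩
    have hvform : ∀ c a, 0 < muMinus μ (Fin.tail c) →
        v c a = μ c * μ (Fin.snoc (Fin.tail c) a) / muMinus μ (Fin.tail c) := by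
      intro c a h
      rw [hvdef]
      unfold MarkovExt
      rw [hqpos _ h a]
      ring
    have hvpos : ∀ c a, u c a ≠ 0 → 0 < v c a := by
      intro c a hne
      obtain ⟨h1, h2, h3⟩ := hkey c a hne
      rw [hvform c a h3]
      positivity
    have harg : ∀ c a, u c a ≠ 0 →
        u c a * muMinus μ (Fin.tail c) / (μ c * μ (Fin.snoc (Fin.tail c) a))
          = u c a / v c a := by
      intro c a hne
      obtain ⟨h1, h2, h3⟩ := hkey c a hne
      rw [hvform c a h3]
      field_simp
      try ring
    set H := -∑ s : Fin n → A, ∑ a, μ (Fin.snoc s a) *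
        Real.log (μ (Fin.snoc s a) / muMinus μ s) with hHdef
    set S := ∑ c, ∑ a, u c a *
        Real.log (u c a * muMinus μ (Fin.tail c) /
          (μ c * μ (Fin.snoc (Fin.tail c) a))) with hSdef
    have hJ : J u = -∑ c, ∑ a, u c a * Real.log (u c a / μ c) := by
      unfold J
      congr 1
      exact Finset.sum_congr rfl fun c _ => by rw [heta c]
    have hsplit : ∀ c a,
        u c a * Real.log (u c a * muMinus μ (Fin.tail c) /
          (μ c * μ (Fin.snoc (Fin.tail c) a)))
        = u c a * Real.log (u c a / μ c)
          - u c a * Real.log (μ (Fin.snoc (Fin.tail c) a) / muMinus μ (Fin.tail c)) := by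
      intro c a
      by_cases hne : u c a = 0
      · simp [hne]
      · obtain ⟨h1, h2, h3⟩ := hkey c a hne
        have hu' : 0 < u c a := (hupos c a).lt_of_ne (Ne.symm hne)
        rw [show u c a * muMinus μ (Fin.tail c) / (μ c * μ (Fin.snoc (Fin.tail c) a))
            = (u c a / μ c) / (μ (Fin.snoc (Fin.tail c) a) / muMinus μ (Fin.tail c)) from by
          field_simp; try ring]
        rw [Real.log_div (ne_of_gt (div_pos hu' h1)) (ne_of_gt (div_pos h2 h3))]
        ring
    have hreindex : ∑ c, ∑ a, u c a *
          Real.log (μ (Fin.snoc (Fin.tail c) a) / muMinus μ (Fin.tail c))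
        = ∑ s : Fin n → A, ∑ a, μ (Fin.snoc s a) *
          Real.log (μ (Fin.snoc s a) / muMinus μ s) := by
      rw [← Equiv.sum_comp (Fin.consEquiv fun _ => A)
        (fun c => ∑ a, u c a * Real.log (μ (Fin.snoc (Fin.tail c) a) /
          muMinus μ (Fin.tail c)))]
      rw [Fintype.sum_prod_type]
      rw [Finset.sum_comm]
      refine Finset.sum_congr rfl fun s _ => ?_
      rw [Finset.sum_comm]
      refine Finset.sum_congr rfl fun a _ => ?_
      have hc : ∀ α : A, ((Fin.consEquiv fun _ => A) (α, s) : Fin (n + 1) → A)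
          = Fin.cons α s := fun α => rfl
      simp only [hc, Fin.tail_cons]
      rw [← Finset.sum_mul, hgroup]
    have part1 : H - J u = S := by
      rw [hJ, hSdef]
      rw [Finset.sum_congr rfl (fun c _ => Finset.sum_congr rfl
        (fun a (_ : a ∈ Finset.univ) => hsplit c a))]
      rw [Finset.sum_congr rfl (fun c (_ : c ∈ (Finset.univ : Finset (Fin (n+1) → A))) =>
        Finset.sum_sub_distrib _ _)]
      rw [Finset.sum_sub_distrib, hreindex, hHdef]
      ring
    have hterm_ge : ∀ c a, u c a - v c a ≤ u c a *
        Real.log (u c a * muMinus μ (Fin.tail c) /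
          (μ c * μ (Fin.snoc (Fin.tail c) a))) := by
      intro c a
      by_cases hne : u c a = 0
      · rw [hne]; simpa using hv0 c a
      · rw [harg c a hne]
        exact gibbs_le (hupos c a) (hv0 c a) fun _ => hvpos c a hne
    have hz : ∑ c, ∑ a, (u c a - v c a) = 0 := by
      simp only [Finset.sum_sub_distrib]
      rw [husum, hvsum]
      ring
    have part2 : 0 ≤ S := by
      have hle : (∑ c, ∑ a, (u c a - v c a)) ≤ S :=
        Finset.sum_le_sum fun c _ => Finset.sum_le_sum fun a _ => hterm_ge c a
      linarith [hle, hz]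
    refine ⟨part1, by rw [part1]; exact part2, ?_⟩
    rw [part1]
    constructor
    · intro hS0
      funext c a
      have hg : ∀ p : (Fin (n + 1) → A) × A, 0 ≤
          u p.1 p.2 * Real.log (u p.1 p.2 * muMinus μ (Fin.tail p.1) /
            (μ p.1 * μ (Fin.snoc (Fin.tail p.1) p.2))) - (u p.1 p.2 - v p.1 p.2) :=
        fun p => sub_nonneg.mpr (hterm_ge p.1 p.2)
      have hgsum : ∑ p : (Fin (n + 1) → A) × A,
          (u p.1 p.2 * Real.log (u p.1 p.2 * muMinus μ (Fin.tail p.1) /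
            (μ p.1 * μ (Fin.snoc (Fin.tail p.1) p.2))) - (u p.1 p.2 - v p.1 p.2)) = 0 := by
        rw [Finset.sum_sub_distrib]
        rw [show ∑ p : (Fin (n + 1) → A) × A,
            u p.1 p.2 * Real.log (u p.1 p.2 * muMinus μ (Fin.tail p.1) /
              (μ p.1 * μ (Fin.snoc (Fin.tail p.1) p.2))) = S from by
          rw [hSdef, Fintype.sum_prod_type]]
        rw [show ∑ p : (Fin (n + 1) → A) × A, (u p.1 p.2 - v p.1 p.2)
            = ∑ c, ∑ a, (u c a - v c a) from Fintype.sum_prod_type _]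
        rw [hz, hS0]
        ring
      have hall := (Finset.sum_eq_zero_iff_of_nonneg
        (fun p _ => hg p)).mp hgsum (c, a) (Finset.mem_univ _)
      have heq0 : u c a * Real.log (u c a * muMinus μ (Fin.tail c) /
          (μ c * μ (Fin.snoc (Fin.tail c) a))) = u c a - v c a := by
        have := sub_eq_zero.mp hall
        simpa using this
      by_cases hne : u c a = 0
      · rw [hne] at heq0 ⊢
        simp only [zero_mul, zero_sub] at heq0
        linarith
      · rw [harg c a hne] at heq0
        exact gibbs_eq (hupos c a) (hv0 c a) (fun _ => hvpos c a hne) heq0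
    · intro huv
      rw [hSdef]
      refine Finset.sum_eq_zero fun c _ => Finset.sum_eq_zero fun a _ => ?_
      by_cases hne : u c a = 0
      · rw [hne]; ring
      · rw [harg c a hne]
        have hveq : u c a = v c a := by rw [huv]
        rw [hveq, div_self (fun h => hne (hveq.trans h)), Real.log_one, mul_zero]
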